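/- The unique real solution τ_0 > 1 of the equation τ^5(τ+2) = (τ-1)(τ+1)^5 is τ_0 = -1/2 + sqrt(5/4 + sqrt 2). -/
import Mathlib


theorem tau0_unique_solution :
    let τ₀ : ℝ := -1 / 2 + Real.sqrt (5 / 4 + Real.sqrt 2)
    1 < τ₀ ∧ τ₀ ^ 5 * (τ₀ + 2) = (τ₀ - 1) * (τ₀ + 1) ^ 5 ∧
      ∀ τ : ℝ, 1 < τ → τ ^ 5 * (τ + 2) = (τ - 1) * (τ + 1) ^ 5 → τ = τ₀ := by
  intro τ₀
  have hτ0 : τ₀ = -1 / 2 + Real.sqrt (5 / 4 + Real.sqrt 2) := rfl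
  rw [hτ0]
  set a := Real.sqrt 2 with ha
  have ha0 : 0 ≤ a := Real.sqrt_nonneg _
  have ha2 : a ^ 2 = 2 := Real.sq_sqrt (by norm_num)
  have ha1 : 1 < a := by nlinarith
  set b := Real.sqrt (5 / 4 + a) with hb
  have hb0 : 0 ≤ b := Real.sqrt_nonneg _
  have hb2 : b ^ 2 = 5 / 4 + a := Real.sq_sqrt (by linarith)
  have hb32 : 3 / 2 < b := by nlinarith
  refine ⟨by linarith, ?_, ?_⟩
  · linear_combination ((-(-1/2 + b) * (2 * b ^ 2 + 2 * a - 5 / 2)) - (b^2 + a - 5/4)) * hb2 +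
      ((-(-1/2 + b) * 2) - 1) * ha2
  · intro τ hτ1 heq
    have h1 : (τ + 1/2) * (2 * (τ + 1/2)^4 - 5 * (τ + 1/2)^2 - 7/8) = 0 := by
      linear_combination -heq
    have hs : (0:ℝ) < τ + 1/2 := by linarith
    have h2 : 2 * (τ + 1/2)^4 - 5 * (τ + 1/2)^2 - 7/8 = 0 := by
      rcases mul_eq_zero.mp h1 with h | h
      · linarith
      · exact h
    have key : ((τ + 1/2)^2 - b^2) * ((τ + 1/2)^2 - (5/4 - a)) = 0 := by
      linear_combination (1/2) * h2 + (5/4 - a - (τ + 1/2)^2) * hb2 - ha2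
    have hpos : (τ + 1/2)^2 - (5/4 - a) > 0 := by nlinarith
    have h3 : (τ + 1/2)^2 = b^2 := by
      rcases mul_eq_zero.mp key with h | h
      · linarith
      · exfalso; linarith
    have h4 : (τ + 1/2 - b) * (τ + 1/2 + b) = 0 := by linear_combination h3
    rcases mul_eq_zero.mp h4 with h | h
    · linarith
    · linarith
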